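/- Let Δ be an n×n matrix whose off-diagonal entries vanish outside the edges of an undirected graph G (i.e., Δ_{lm} ≠ 0 with l ≠ m only if (l, m) is an edge of G), for instance a graph Laplacian. Let h > 0, let g_{c,h} be a Cayley filter of order r, and let G̃δ_m be the approximate Cayley filter output computed by the Jacobi approximation scheme with K iterations applied to the delta signal δ_m. Then G̃δ_m is supported in the r(K+1)-hop neighborhood N_{r(K+1),m} of m, i.e., (G̃δ_m)_l = 0 for every vertex l ∉ N_{r(K+1),m}. -/

import Mathlib

open Matrix Complex Finset

noncomputable section

/-- Degree of vertex `i`: sum of weights of edges incident to `i`. -/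
def gDegree {n : ℕ} (W : Matrix (Fin n) (Fin n) ℝ) (i : Fin n) : ℝ :=
  ∑ j ∈ Finset.univ.erase i, W i j

/-- Unnormalized graph Laplacian `Δ_u = D − W`. -/
def unLaplacian {n : ℕ} (W : Matrix (Fin n) (Fin n) ℝ) : Matrix (Fin n) (Fin n) ℝ :=
  Matrix.diagonal (gDegree W) - W

/-- Normalized graph Laplacian `Δ_n = I − D^{-1/2} W D^{-1/2}`. -/
def normLaplacian {n : ℕ} (W : Matrix (Fin n) (Fin n) ℝ) : Matrix (Fin n) (Fin n) ℝ :=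
  1 - Matrix.diagonal (fun i => (Real.sqrt (gDegree W i))⁻¹) * W *
      Matrix.diagonal (fun i => (Real.sqrt (gDegree W i))⁻¹)

/-- Complexification of a real matrix. -/
def cplx {n : ℕ} (Δ : Matrix (Fin n) (Fin n) ℝ) : Matrix (Fin n) (Fin n) ℂ :=
  Δ.map Complex.ofReal

/-- The matrix `hΔ − iI`. -/
def cayleyNum {n : ℕ} (Δ : Matrix (Fin n) (Fin n) ℝ) (hz : ℝ) : Matrix (Fin n) (Fin n) ℂ :=
  (hz : ℂ) • cplx Δ - Complex.I • 1

/-- The matrix `hΔ + iI`. -/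
def cayleyDen {n : ℕ} (Δ : Matrix (Fin n) (Fin n) ℝ) (hz : ℝ) : Matrix (Fin n) (Fin n) ℂ :=
  (hz : ℂ) • cplx Δ + Complex.I • 1

/-- The Cayley transform `C(hΔ) = (hΔ − iI)(hΔ + iI)⁻¹` of a scaled matrix. -/
def cayleyOp {n : ℕ} (Δ : Matrix (Fin n) (Fin n) ℝ) (hz : ℝ) : Matrix (Fin n) (Fin n) ℂ :=
  cayleyNum Δ hz * (cayleyDen Δ hz)⁻¹

/-- Cayley filter `g_{c,h}(Δ) = c₀ I + 2 Re { Σ_{j=1}^r c_j (hΔ−iI)^j (hΔ+iI)^{−j} }`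
(entrywise real part). -/
def cayleyFilter {n : ℕ} (Δ : Matrix (Fin n) (Fin n) ℝ) (hz : ℝ) (r : ℕ)
    (c₀ : ℝ) (c : ℕ → ℂ) : Matrix (Fin n) (Fin n) ℝ :=
  c₀ • (1 : Matrix (Fin n) (Fin n) ℝ) +
    (2 : ℝ) • (∑ j ∈ Finset.Icc 1 r,
      c j • (cayleyNum Δ hz ^ j * ((cayleyDen Δ hz)⁻¹) ^ j)).map Complex.re

/-- Euclidean (`L₂`) norm of a finite signal. -/
def l2norm {n : ℕ} {𝕜 : Type*} [RCLike 𝕜] (v : Fin n → 𝕜) : ℝ :=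
  Real.sqrt (∑ i, ‖v i‖ ^ 2)

/-- Operator norm induced by the Euclidean norm. -/
def l2opNorm {n : ℕ} (A : Matrix (Fin n) (Fin n) ℂ) : ℝ :=
  sSup {t : ℝ | ∃ x : Fin n → ℂ, l2norm x = 1 ∧ t = l2norm (A *ᵥ x)}

/-- Maximum-row-sum norm `‖A‖_∞ = max_i Σ_k |a_{ik}|`. -/
def rowSumNorm {n : ℕ} (A : Matrix (Fin n) (Fin n) ℂ) : ℝ :=
  sSup (Set.range fun i => ∑ k, ‖A i k‖)

/-- Diagonal part `Diag(A)` of a matrix. -/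
def diagPart {n : ℕ} (A : Matrix (Fin n) (Fin n) ℂ) : Matrix (Fin n) (Fin n) ℂ :=
  Matrix.diagonal fun i => A i i

/-- Off-diagonal part `Off(A) = A − Diag(A)` of a matrix. -/
def offPart {n : ℕ} (A : Matrix (Fin n) (Fin n) ℂ) : Matrix (Fin n) (Fin n) ℂ :=
  A - diagPart A

/-- Jacobi iteration matrix `J = −Diag(A)⁻¹ Off(A)`. -/
def jacobiMatrix {n : ℕ} (A : Matrix (Fin n) (Fin n) ℂ) : Matrix (Fin n) (Fin n) ℂ :=
  -((diagPart A)⁻¹ * offPart A)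

/-- Jacobi iterations `x^{(k+1)} = J x^{(k)} + b`, initialized at `x^{(0)} = b`. -/
def jacobiIter {n : ℕ} (J : Matrix (Fin n) (Fin n) ℂ) (b : Fin n → ℂ) : ℕ → (Fin n → ℂ)
  | 0 => b
  | (k+1) => J *ᵥ jacobiIter J b k + b

/-- The Jacobi approximation scheme: `ỹ₀ = f` and, for `j ≥ 1`, `ỹ_j` is the result of `K`
Jacobi iterations for the system `(hΔ+iI) y = (hΔ−iI) ỹ_{j-1}`, initialized at
`b_j = Diag(hΔ+iI)⁻¹ (hΔ−iI) ỹ_{j-1}`. -/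
def jacobiScheme {n : ℕ} (Δ : Matrix (Fin n) (Fin n) ℝ) (hz : ℝ) (K : ℕ)
    (f : Fin n → ℝ) : ℕ → (Fin n → ℂ)
  | 0 => fun i => (f i : ℂ)
  | (j+1) =>
      jacobiIter (jacobiMatrix (cayleyDen Δ hz))
        ((diagPart (cayleyDen Δ hz))⁻¹ *ᵥ (cayleyNum Δ hz *ᵥ jacobiScheme Δ hz K f j)) K

/-- The normalized Jacobi approximation scheme: as `jacobiScheme`, but each `ỹ_j` (`j ≥ 1`)
is rescaled so that `‖ỹ_j‖₂ = ‖f‖₂`. -/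
def jacobiSchemeN {n : ℕ} (Δ : Matrix (Fin n) (Fin n) ℝ) (hz : ℝ) (K : ℕ)
    (f : Fin n → ℝ) : ℕ → (Fin n → ℂ)
  | 0 => fun i => (f i : ℂ)
  | (j+1) =>
      let y := jacobiIter (jacobiMatrix (cayleyDen Δ hz))
        ((diagPart (cayleyDen Δ hz))⁻¹ *ᵥ (cayleyNum Δ hz *ᵥ jacobiSchemeN Δ hz K f j)) K
      (l2norm f / l2norm y) • y

/-- Approximate Cayley filter output `G̃f = c₀ ỹ₀ + 2 Re Σ_{j=1}^r c_j ỹ_j` (Jacobi scheme). -/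
def approxCayley {n : ℕ} (Δ : Matrix (Fin n) (Fin n) ℝ) (hz : ℝ) (r : ℕ)
    (c₀ : ℝ) (c : ℕ → ℂ) (K : ℕ) (f : Fin n → ℝ) : Fin n → ℝ :=
  fun i => c₀ * f i + 2 * (∑ j ∈ Finset.Icc 1 r, c j * jacobiScheme Δ hz K f j i).re

/-- Approximate Cayley filter output for the normalized Jacobi scheme. -/
def approxCayleyN {n : ℕ} (Δ : Matrix (Fin n) (Fin n) ℝ) (hz : ℝ) (r : ℕ)
    (c₀ : ℝ) (c : ℕ → ℂ) (K : ℕ) (f : Fin n → ℝ) : Fin n → ℝ :=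
  fun i => c₀ * f i + 2 * (∑ j ∈ Finset.Icc 1 r, c j * jacobiSchemeN Δ hz K f j i).re

/-- `k`-hop neighborhood of vertex `m` w.r.t. an adjacency relation `A`: all vertices reachable
from `m` by a path of at most `k` edges. -/
def khop {n : ℕ} (A : Fin n → Fin n → Prop) : ℕ → Fin n → Set (Fin n)
  | 0, m => {m}
  | (k+1), m => khop A k m ∪ {l | ∃ v ∈ khop A k m, A v l}

/-- Delta signal at vertex `m`. -/
def deltaSig {n : ℕ} (m : Fin n) : Fin n → ℝ :=
  fun i => if i = m then 1 else 0


section SuppLemmas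

variable {n : ℕ} {A : Fin n → Fin n → Prop}

lemma khop_le {m : Fin n} {s t : ℕ} (h : s ≤ t) : khop A s m ⊆ khop A t m := by
  induction t with
  | zero => obtain rfl : s = 0 := Nat.le_zero.mp h; exact subset_rfl
  | succ t ih =>
    rcases Nat.lt_or_ge s (t + 1) with h' | h'
    · exact (ih (Nat.lt_succ_iff.mp h')).trans Set.subset_union_left
    · obtain rfl : s = t + 1 := le_antisymm h h'
      exact subset_rfl

lemma mem_khop_self (m : Fin n) (k : ℕ) : m ∈ khop A k m :=
  khop_le (Nat.zero_le k) (by simp [khop])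

/-- A matrix which moves at most one hop spreads support by one hop. -/
lemma mulVec_supp1 {M : Matrix (Fin n) (Fin n) ℂ} {v : Fin n → ℂ} {m : Fin n} {s : ℕ}
    (hM : ∀ l k, M l k ≠ 0 → l = k ∨ A k l)
    (hv : ∀ l, l ∉ khop A s m → v l = 0) :
    ∀ l, l ∉ khop A (s + 1) m → (M *ᵥ v) l = 0 := by
  intro l hl
  simp only [Matrix.mulVec, dotProduct]
  apply Finset.sum_eq_zero
  intro k _
  by_cases hMk : M l k = 0
  · simp [hMk]
  · by_cases hk : k ∈ khop A s m
    · exfalso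
      rcases hM l k hMk with rfl | hA
      · exact hl (Set.mem_union_left _ hk)
      · exact hl (Set.mem_union_right _ ⟨k, hk, hA⟩)
    · simp [hv k hk]

/-- A matrix which is zero off the diagonal preserves support. -/
lemma mulVec_supp0 {M : Matrix (Fin n) (Fin n) ℂ} {v : Fin n → ℂ} {m : Fin n} {s : ℕ}
    (hM : ∀ l k, l ≠ k → M l k = 0)
    (hv : ∀ l, l ∉ khop A s m → v l = 0) :
    ∀ l, l ∉ khop A s m → (M *ᵥ v) l = 0 := by
  intro l hl
  simp only [Matrix.mulVec, dotProduct]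
  apply Finset.sum_eq_zero
  intro k _
  by_cases hlk : l = k
  · subst hlk; simp [hv l hl]
  · simp [hM l k hlk]

lemma cayleyNum_hop {Δ : Matrix (Fin n) (Fin n) ℝ}
    (hAsym : ∀ l m, A l m → A m l)
    (hsupp : ∀ l m, l ≠ m → Δ l m ≠ 0 → A l m) (hz : ℝ) :
    ∀ l k, cayleyNum Δ hz l k ≠ 0 → l = k ∨ A k l := by
  intro l k h
  by_cases hlk : l = k
  · exact Or.inl hlk
  · right
    apply hAsym l k
    apply hsupp l k hlk
    intro h0
    apply h
    simp [cayleyNum, cplx, Matrix.sub_apply, Matrix.smul_apply, Matrix.map_apply,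
      Matrix.one_apply_ne hlk, h0]

lemma diagPart_inv_offdiag (X : Matrix (Fin n) (Fin n) ℂ) :
    ∀ l k, l ≠ k → (diagPart X)⁻¹ l k = 0 := by
  intro l k hlk
  rw [diagPart, Matrix.inv_diagonal]
  exact Matrix.diagonal_apply_ne _ hlk

lemma jacobiMatrix_hop {Δ : Matrix (Fin n) (Fin n) ℝ}
    (hAsym : ∀ l m, A l m → A m l)
    (hsupp : ∀ l m, l ≠ m → Δ l m ≠ 0 → A l m) (hz : ℝ) :
    ∀ l k, jacobiMatrix (cayleyDen Δ hz) l k ≠ 0 → l = k ∨ A k l := by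
  intro l k h
  by_cases hlk : l = k
  · exact Or.inl hlk
  · right
    apply hAsym l k
    apply hsupp l k hlk
    intro h0
    apply h
    have hoff : offPart (cayleyDen Δ hz) l k = 0 := by
      simp [offPart, diagPart, cayleyDen, cplx, Matrix.sub_apply, Matrix.add_apply,
        Matrix.smul_apply, Matrix.map_apply, Matrix.diagonal_apply_ne _ hlk,
        Matrix.one_apply_ne hlk, h0]
    rw [jacobiMatrix, Matrix.neg_apply, diagPart, Matrix.inv_diagonal,
      Matrix.diagonal_mul, hoff, mul_zero, neg_zero]

lemma jacobiIter_supp {J : Matrix (Fin n) (Fin n) ℂ} {b : Fin n → ℂ} {m : Fin n} {s : ℕ}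
    (hJ : ∀ l k, J l k ≠ 0 → l = k ∨ A k l)
    (hb : ∀ l, l ∉ khop A s m → b l = 0) :
    ∀ k, ∀ l, l ∉ khop A (s + k) m → jacobiIter J b k l = 0 := by
  intro k
  induction k with
  | zero => simpa [jacobiIter] using hb
  | succ k ih =>
    intro l hl
    have h1 : (J *ᵥ jacobiIter J b k) l = 0 := mulVec_supp1 hJ ih l hl
    have h2 : b l = 0 := hb l fun hm => hl (khop_le (Nat.le_add_right _ _) hm)
    simp [jacobiIter, h1, h2]

lemma jacobiScheme_supp {Δ : Matrix (Fin n) (Fin n) ℝ}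
    (hAsym : ∀ l m, A l m → A m l)
    (hsupp : ∀ l m, l ≠ m → Δ l m ≠ 0 → A l m) (hz : ℝ) (K : ℕ) (m : Fin n) :
    ∀ j, ∀ l, l ∉ khop A (j * (K + 1)) m → jacobiScheme Δ hz K (deltaSig m) j l = 0 := by
  intro j
  induction j with
  | zero =>
    intro l hl
    have hlm : l ≠ m := by
      intro h; exact hl (by rw [h]; exact mem_khop_self m _)
    simp [jacobiScheme, deltaSig, hlm]
  | succ j ih =>
    intro l hl
    have h1 : ∀ l, l ∉ khop A (j * (K + 1) + 1) m →
        ((diagPart (cayleyDen Δ hz))⁻¹ *ᵥ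
          (cayleyNum Δ hz *ᵥ jacobiScheme Δ hz K (deltaSig m) j)) l = 0 :=
      mulVec_supp0 (diagPart_inv_offdiag _)
        (mulVec_supp1 (cayleyNum_hop hAsym hsupp hz) ih)
    have h2 := jacobiIter_supp (jacobiMatrix_hop hAsym hsupp hz) h1 K l
    have harith : j * (K + 1) + 1 + K = (j + 1) * (K + 1) := by ring
    rw [harith] at h2
    exact h2 hl

end SuppLemmas

/-- If the off-diagonal entries of `Δ` vanish outside the edges of an
undirected graph, then the approximate Cayley filter output `G̃δ_m` computed by the Jacobi
scheme with `K` iterations is supported in the `r(K+1)`-hop neighborhood of `m`. -/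
theorem approxCayley_delta_support {n : ℕ} (Δ : Matrix (Fin n) (Fin n) ℝ)
    (A : Fin n → Fin n → Prop) (hAsym : ∀ l m, A l m → A m l)
    (hsupp : ∀ l m, l ≠ m → Δ l m ≠ 0 → A l m)
    (hz : ℝ) (hhz : 0 < hz) (r : ℕ) (c₀ : ℝ) (c : ℕ → ℂ) (K : ℕ) (m : Fin n) :
    ∀ l : Fin n, l ∉ khop A (r * (K + 1)) m →
      approxCayley Δ hz r c₀ c K (deltaSig m) l = 0 := by
  intro l hl
  have hlm : l ≠ m := by
    intro h; exact hl (by rw [h]; exact mem_khop_self m _)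
  have hterm : ∀ j ∈ Finset.Icc 1 r, c j * jacobiScheme Δ hz K (deltaSig m) j l = 0 := by
    intro j hj
    have hjr : j ≤ r := (Finset.mem_Icc.mp hj).2
    have := jacobiScheme_supp hAsym hsupp hz K m j l
      (fun hm => hl (khop_le (Nat.mul_le_mul_right _ hjr) hm))
    simp [this]
  simp [approxCayley, deltaSig, hlm, Finset.sum_congr rfl hterm]

end
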